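/- Let V be the inverse limit of finite-dimensional K-vector spaces V_i with projections Q_i : V → V_i, and let T : V → W be a continuous K-linear map into a finite-dimensional K-vector space W. Then there exists an index i such that ker Q_i ⊆ ker T, and hence T factors through Q_i as T = T_i ∘ Q_i for some K-linear map T_i : V_i → W. -/

import Mathlib

/-- The inverse limit of an inverse sequence of `K`-modules along the connecting
maps `q i : V (i+1) → V i`, realized as the submodule of consistent sequences in
the product `∀ i, V i`. -/
def invLim (K : Type) [Field K] (V : ℕ → Type) [∀ i, AddCommGroup (V i)]
    [∀ i, Module K (V i)] (q : ∀ i, V (i + 1) →ₗ[K] V i) : Submodule K (∀ i, V i) where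
  carrier := {v | ∀ i, q i (v (i + 1)) = v i}
  add_mem' := by intro a b ha hb i; simp [ha i, hb i]
  zero_mem' := by intro i; simp
  smul_mem' := by intro c a ha i; simp [ha i]

/-- The canonical projection `Q i` from the inverse limit to the `i`-th stage. -/
def invLimProj (K : Type) [Field K] (V : ℕ → Type) [∀ i, AddCommGroup (V i)]
    [∀ i, Module K (V i)] (q : ∀ i, V (i + 1) →ₗ[K] V i) (i : ℕ) :
    ↥(invLim K V q) →ₗ[K] V i :=
  (LinearMap.proj i).comp (invLim K V q).subtype

/-- The composite connecting map `q^j_i : V j → V i` for `i ≤ j`. -/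
def qIter (K : Type) [Field K] (V : ℕ → Type) [∀ i, AddCommGroup (V i)]
    [∀ i, Module K (V i)] (q : ∀ i, V (i + 1) →ₗ[K] V i) (i : ℕ) :
    ∀ j, i ≤ j → (V j →ₗ[K] V i)
  | 0, h => by
    have hi : i = 0 := Nat.le_zero.mp h
    subst hi; exact LinearMap.id
  | j + 1, h =>
    if heq : i = j + 1 then by subst heq; exact LinearMap.id
    else (qIter K V q i j (by omega)).comp (q j)

lemma invLim_zero_of_le (K : Type) [Field K] (V : ℕ → Type) [∀ i, AddCommGroup (V i)]
    [∀ i, Module K (V i)] (q : ∀ i, V (i + 1) →ₗ[K] V i)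
    (v : ↥(invLim K V q)) (j : ℕ) (hvj : (v : ∀ i, V i) j = 0)
    (i : ℕ) (h : i ≤ j) : (v : ∀ i, V i) i = 0 := by
  induction j with
  | zero =>
    obtain rfl := Nat.le_zero.mp h
    exact hvj
  | succ j ih =>
    rcases Nat.lt_or_ge i (j+1) with hlt | hge
    · apply ih _ (Nat.lt_succ_iff.mp hlt)
      have hv := v.2 j
      change q j ((v : ∀ i, V i) (j+1)) = (v : ∀ i, V i) j at hv
      rw [← hv, hvj, map_zero]
    · have : i = j + 1 := le_antisymm h hge
      subst this; exact hvj

/-- If `V = lim V_i` is a pro-finite-dimensional space over a topological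
field `K` with projections `Q i`, and `T : V → W` is a continuous linear map into a
finite-dimensional `K`-vector space `W = K^m`, then some `i` satisfies
`ker (Q i) ⊆ ker T`, and `T` factors as `T = T_i ∘ Q i` for a linear `T_i : V_i → W`. -/
theorem stmt2 (K : Type) [Field K] [TopologicalSpace K] [IsTopologicalDivisionRing K]
    [T2Space K]
    (n : ℕ → ℕ) (q : ∀ i, (Fin (n (i + 1)) → K) →ₗ[K] (Fin (n i) → K))
    (hq : ∀ i, Continuous (q i))
    (m : ℕ) (T : ↥(invLim K (fun i => Fin (n i) → K) q) →ₗ[K] (Fin m → K))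
    (hT : Continuous T) :
    ∃ i, LinearMap.ker (invLimProj K (fun i => Fin (n i) → K) q i) ≤ LinearMap.ker T ∧
      ∃ Ti : (Fin (n i) → K) →ₗ[K] (Fin m → K),
        T = Ti.comp (invLimProj K (fun i => Fin (n i) → K) q i) := by
  classical
  -- choose U open nbhd of 0 with 1 ∉ U
  obtain ⟨U, U', hUopen, hU'open, h0U, h1U', hdisj⟩ := t2_separation (zero_ne_one (α := K))
  have h1U : (1 : K) ∉ U := fun h => Set.disjoint_left.mp hdisj h h1U'
  -- the target neighborhood S = U^m
  set S : Set (Fin m → K) := Set.pi Set.univ (fun _ => U) with hS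
  have hSnhds : S ∈ nhds (0 : Fin m → K) := by
    apply (isOpen_set_pi Set.finite_univ (fun _ _ => hUopen)).mem_nhds
    intro j _; exact h0U
  -- preimage under T is a neighborhood of 0
  have hpre : T ⁻¹' S ∈ nhds (0 : ↥(invLim K (fun i => Fin (n i) → K) q)) := by
    have := hT.continuousAt (x := 0)
    rw [ContinuousAt, map_zero] at this
    exact this hSnhds
  rw [nhds_induced, Filter.mem_comap] at hpre
  obtain ⟨O, hO, hOsub⟩ := hpre
  rw [show ((0 : ↥(invLim K (fun i => Fin (n i) → K) q)) : ∀ i, Fin (n i) → K) = 0 from rfl,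
    nhds_pi, Filter.mem_pi] at hO
  obtain ⟨I, hIfin, t, ht, htsub⟩ := hO
  obtain ⟨i₀, hi₀⟩ := hIfin.bddAbove
  set Q := invLimProj K (fun i => Fin (n i) → K) q i₀ with hQ
  have hker : LinearMap.ker Q ≤ LinearMap.ker T := by
    intro v hv
    simp only [hQ, LinearMap.mem_ker, invLimProj, LinearMap.comp_apply] at hv ⊢
    -- every scalar multiple of v maps into S
    have key : ∀ c : K, ∀ j : Fin m, c * (T v) j ∈ U := by
      intro c j
      have hmem : ((c • v : ↥(invLim K (fun i => Fin (n i) → K) q)) : ∀ i, Fin (n i) → K)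
          ∈ Set.pi I t := by
        intro i hi
        have hzero : ((c • v : ↥(invLim K (fun i => Fin (n i) → K) q)) : ∀ i, Fin (n i) → K) i
            = 0 := by
          apply invLim_zero_of_le K (fun i => Fin (n i) → K) q (c • v) i₀
          · show c • ((v : ∀ i, Fin (n i) → K) i₀) = 0
            have : (v : ∀ i, Fin (n i) → K) i₀ = 0 := hv
            rw [this, smul_zero]
          · exact hi₀ hi
        rw [hzero]
        exact mem_of_mem_nhds (ht i)
      have : T (c • v) ∈ S := hOsub (htsub hmem)
      rw [map_smul] at this
      simpa using this j trivial
    by_contra hne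
    obtain ⟨j, hj⟩ : ∃ j, (T v) j ≠ 0 := by
      by_contra h
      push_neg at h
      exact hne (funext h)
    have := key ((T v) j)⁻¹ j
    rw [inv_mul_cancel₀ hj] at this
    exact h1U this
  refine ⟨i₀, hker, ?_⟩
  -- T descends to the quotient, then transfers to range Q, then extends
  · 
    let Tbar := (LinearMap.ker Q).liftQ T hker
    let e := Q.quotKerEquivRange
    obtain ⟨Ti, hTi⟩ := LinearMap.exists_extend (Tbar.comp e.symm.toLinearMap)
    refine ⟨Ti, ?_⟩
    ext v
    have h1 : e ((LinearMap.ker Q).mkQ v) = ⟨Q v, LinearMap.mem_range_self Q v⟩ := by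
      apply Subtype.ext
      rfl
    have h2 : Ti (Q v) = Tbar (e.symm ⟨Q v, LinearMap.mem_range_self Q v⟩) := by
      have := LinearMap.congr_fun hTi ⟨Q v, LinearMap.mem_range_self Q v⟩
      exact this
    simp only [LinearMap.comp_apply]
    rw [h2, ← h1, LinearEquiv.symm_apply_apply]
    rfl
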